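/- Let r > 0, let S : (0,r) → ℝ be continuous and positive, and let w : (0,r) → ℝ be continuously differentiable such that S·w is continuously differentiable, with (S·w)'(t)/S(t) ≥ d for all t ∈ (0,r) and |w(t)| ≤ s₀ for all t ∈ (0,r), where d > 0 and s₀ > 0 are constants. Then for every continuously differentiable function u with compact support contained in (0,r), ∫₀^r u'(t)²·S(t) dt ≥ (d²/(4·s₀²))·∫₀^r u(t)²·S(t) dt. -/

import Mathlib

lemma bm_integral_trunc (f : ℝ → ℝ) (a b r : ℝ) (h0a : 0 ≤ a) (hab : a ≤ b) (hbr : b ≤ r)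
    (hf : ContinuousOn f (Set.Icc a b))
    (h1 : ∀ t ∈ Set.Icc 0 a, f t = 0) (h2 : ∀ t ∈ Set.Icc b r, f t = 0) :
    ∫ t in (0:ℝ)..r, f t = ∫ t in a..b, f t := by
  have i1 : IntervalIntegrable f MeasureTheory.volume 0 a := by
    apply ContinuousOn.intervalIntegrable
    rw [Set.uIcc_of_le h0a]
    exact continuousOn_const.congr h1
  have i2 : IntervalIntegrable f MeasureTheory.volume a b := by
    apply ContinuousOn.intervalIntegrable
    rwa [Set.uIcc_of_le hab]
  have i3 : IntervalIntegrable f MeasureTheory.volume b r := by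
    apply ContinuousOn.intervalIntegrable
    rw [Set.uIcc_of_le hbr]
    exact continuousOn_const.congr h2
  have e1 : ∫ t in (0:ℝ)..a, f t = 0 := by
    rw [intervalIntegral.integral_congr (g := fun _ => (0:ℝ))
      (by rw [Set.uIcc_of_le h0a]; exact h1)]
    simp
  have e3 : ∫ t in b..r, f t = 0 := by
    rw [intervalIntegral.integral_congr (g := fun _ => (0:ℝ))
      (by rw [Set.uIcc_of_le hbr]; exact h2)]
    simp
  have s1 := intervalIntegral.integral_add_adjacent_intervals i1 i2
  have s2 := intervalIntegral.integral_add_adjacent_intervals (i1.trans i2) i3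
  linarith

set_option maxHeartbeats 1000000 in
/-- One-dimensional weighted Bessa–Montenegro estimate: if `(S·w)'/S ≥ d > 0` and `|w| ≤ s₀`
on `(0,r)`, then every `C¹` function `u` compactly supported in `(0,r)` satisfies
`∫₀^r u'² S ≥ (d²/(4 s₀²)) ∫₀^r u² S`. -/
theorem stmt_10 (r : ℝ) (hr : 0 < r) (S w : ℝ → ℝ) (d s₀ : ℝ) (hd : 0 < d) (hs₀ : 0 < s₀)
    (hS_cont : ContinuousOn S (Set.Ioo 0 r)) (hS_pos : ∀ t ∈ Set.Ioo 0 r, 0 < S t)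
    (hw : ContDiffOn ℝ 1 w (Set.Ioo 0 r))
    (hSw : ContDiffOn ℝ 1 (fun t => S t * w t) (Set.Ioo 0 r))
    (hdiv : ∀ t ∈ Set.Ioo 0 r, deriv (fun t => S t * w t) t / S t ≥ d)
    (hwb : ∀ t ∈ Set.Ioo 0 r, |w t| ≤ s₀)
    (u : ℝ → ℝ) (hu : ContDiff ℝ 1 u) (hu_supp : HasCompactSupport u)
    (hsupp : tsupport u ⊆ Set.Ioo 0 r) :
    (∫ t in (0:ℝ)..r, deriv u t ^ 2 * S t) ≥
      d ^ 2 / (4 * s₀ ^ 2) * ∫ t in (0:ℝ)..r, u t ^ 2 * S t := by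
  by_cases hK : (tsupport u).Nonempty
  swap
  · -- u is identically zero
    have hu0 : u = fun _ => (0:ℝ) := by
      funext t
      exact image_eq_zero_of_notMem_tsupport (fun h => hK ⟨t, h⟩)
    rw [hu0]
    simp
  -- set up the compact interval
  set K := tsupport u with hKdef
  set a := sInf K with ha_def
  set b := sSup K with hb_def
  have haK : a ∈ K := hu_supp.sInf_mem hK
  have hbK : b ∈ K := hu_supp.sSup_mem hK
  have hKsub : K ⊆ Set.Icc a b := fun t ht =>
    ⟨csInf_le hu_supp.bddBelow ht, le_csSup hu_supp.bddAbove ht⟩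
  have haI : a ∈ Set.Ioo 0 r := hsupp haK
  have hbI : b ∈ Set.Ioo 0 r := hsupp hbK
  have hab : a ≤ b := (hKsub haK).2
  set a' := a / 2 with ha'
  set b' := (b + r) / 2 with hb'
  have ha'0 : 0 < a' := by simp [ha']; linarith [haI.1]
  have ha'a : a' < a := by simp [ha']; linarith [haI.1]
  have hbb' : b < b' := by simp [hb']; linarith [hbI.2]
  have hb'r : b' < r := by simp [hb']; linarith [hbI.2]
  have ha'b' : a' ≤ b' := by linarith
  have hIcc : Set.Icc a' b' ⊆ Set.Ioo 0 r := fun t ht => ⟨lt_of_lt_of_le ha'0 ht.1, lt_of_le_of_lt ht.2 hb'r⟩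
  -- u and deriv u vanish outside [a', b']
  have hnotK : ∀ t, t < a ∨ b < t → t ∉ K := by
    intro t ht hmem
    rcases ht with h | h
    · exact absurd (hKsub hmem).1 (not_le.mpr h)
    · exact absurd (hKsub hmem).2 (not_le.mpr h)
  have hu_zero : ∀ t, t < a ∨ b < t → u t = 0 := fun t ht =>
    image_eq_zero_of_notMem_tsupport (hnotK t ht)
  have hdu_zero : ∀ t, t < a ∨ b < t → deriv u t = 0 := by
    intro t ht
    by_contra h
    exact hnotK t ht (support_deriv_subset h)
  -- continuity facts
  have hu_cont : Continuous u := hu.continuous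
  have hdu_cont : Continuous (deriv u) := hu.continuous_deriv le_rfl
  set g := fun t => S t * w t with hg_def
  have hg_cont : ContinuousOn g (Set.Ioo 0 r) := hS_cont.mul hw.continuousOn
  have hdg_cont : ContinuousOn (deriv g) (Set.Ioo 0 r) :=
    hSw.continuousOn_deriv_of_isOpen isOpen_Ioo le_rfl
  have hS_contI : ContinuousOn S (Set.Icc a' b') := hS_cont.mono hIcc
  have hg_contI : ContinuousOn g (Set.Icc a' b') := hg_cont.mono hIcc
  have hdg_contI : ContinuousOn (deriv g) (Set.Icc a' b') := hdg_cont.mono hIcc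
  -- interval integrability of the various integrands on [a', b']
  have hA_int : IntervalIntegrable (fun t => u t ^ 2 * S t) MeasureTheory.volume a' b' := by
    apply ContinuousOn.intervalIntegrable
    rw [Set.uIcc_of_le ha'b']
    exact ((hu_cont.pow 2).continuousOn).mul hS_contI
  have hB_int : IntervalIntegrable (fun t => deriv u t ^ 2 * S t) MeasureTheory.volume a' b' := by
    apply ContinuousOn.intervalIntegrable
    rw [Set.uIcc_of_le ha'b']
    exact ((hdu_cont.pow 2).continuousOn).mul hS_contI
  have hC_int : IntervalIntegrable (fun t => u t ^ 2 * deriv g t) MeasureTheory.volume a' b' := by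
    apply ContinuousOn.intervalIntegrable
    rw [Set.uIcc_of_le ha'b']
    exact ((hu_cont.pow 2).continuousOn).mul hdg_contI
  have hP_int : IntervalIntegrable (fun t => 2 * u t * deriv u t * g t) MeasureTheory.volume a' b' := by
    apply ContinuousOn.intervalIntegrable
    rw [Set.uIcc_of_le ha'b']
    exact ((((continuous_const.mul hu_cont).mul hdu_cont)).continuousOn).mul hg_contI
  have hD_int : IntervalIntegrable (fun t => 2 * s₀ * |u t * deriv u t| * S t) MeasureTheory.volume a' b' := by
    apply ContinuousOn.intervalIntegrable
    rw [Set.uIcc_of_le ha'b']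
    exact ((continuous_const.mul (hu_cont.mul hdu_cont).abs).continuousOn).mul hS_contI
  -- FTC: integral of (u^2 * g)' over [a', b'] is zero
  have hFTC : (∫ t in a'..b', (2 * u t * deriv u t * g t + u t ^ 2 * deriv g t)) = 0 := by
    have hder : ∀ t ∈ Set.uIcc a' b',
        HasDerivAt (fun t => u t ^ 2 * g t) (2 * u t * deriv u t * g t + u t ^ 2 * deriv g t) t := by
      intro t ht
      rw [Set.uIcc_of_le ha'b'] at ht
      have htI : t ∈ Set.Ioo 0 r := hIcc ht
      have hut : HasDerivAt u (deriv u t) t := (hu.differentiable one_ne_zero t).hasDerivAt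
      have hgt : HasDerivAt g (deriv g t) t :=
        ((hSw.differentiableOn one_ne_zero).differentiableAt
          (isOpen_Ioo.mem_nhds htI)).hasDerivAt
      have : HasDerivAt (fun t => u t ^ 2 * g t) _ t := (hut.fun_pow 2).fun_mul hgt
      convert this using 1
      push_cast
      ring
    have hint : IntervalIntegrable (fun t => 2 * u t * deriv u t * g t + u t ^ 2 * deriv g t)
        MeasureTheory.volume a' b' := hP_int.add hC_int
    rw [intervalIntegral.integral_eq_sub_of_hasDerivAt hder hint]
    have h1 : u a' = 0 := hu_zero a' (Or.inl ha'a)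
    have h2 : u b' = 0 := hu_zero b' (Or.inr hbb')
    simp [h1, h2]
  -- key identity: C = -P
  have hsplitPC : (∫ t in a'..b', u t ^ 2 * deriv g t) =
      -∫ t in a'..b', 2 * u t * deriv u t * g t := by
    have := intervalIntegral.integral_add hP_int hC_int
    rw [hFTC] at this
    linarith [this]
  -- abbreviations
  set A := ∫ t in a'..b', u t ^ 2 * S t with hA
  set B := ∫ t in a'..b', deriv u t ^ 2 * S t with hB
  set C := ∫ t in a'..b', u t ^ 2 * deriv g t with hCd
  set D := ∫ t in a'..b', 2 * s₀ * |u t * deriv u t| * S t with hDd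
  -- (1) d * A ≤ C
  have h1 : d * A ≤ C := by
    rw [hA, ← intervalIntegral.integral_const_mul]
    apply intervalIntegral.integral_mono_on ha'b' (hA_int.const_mul d) hC_int
    intro t ht
    have htI := hIcc ht
    have hSt := hS_pos t htI
    have hdg : deriv g t ≥ d * S t := by
      have := hdiv t htI
      rw [ge_iff_le, le_div_iff₀ hSt] at this
      linarith
    have hu2 : (0:ℝ) ≤ u t ^ 2 := sq_nonneg _
    nlinarith
  -- (2) C ≤ D
  have h2 : C ≤ D := by
    rw [hsplitPC, hDd, ← intervalIntegral.integral_neg]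
    apply intervalIntegral.integral_mono_on ha'b' hP_int.neg hD_int
    intro t ht
    have htI := hIcc ht
    have hSt := (hS_pos t htI).le
    have hwt := hwb t htI
    have habs : -(u t * deriv u t * w t) ≤ |u t * deriv u t| * s₀ := by
      calc -(u t * deriv u t * w t) ≤ |u t * deriv u t * w t| := neg_le_abs _
        _ = |u t * deriv u t| * |w t| := abs_mul _ _
        _ ≤ |u t * deriv u t| * s₀ :=
          mul_le_mul_of_nonneg_left hwt (abs_nonneg _)
    simp only [Pi.neg_apply, hg_def]
    nlinarith [mul_le_mul_of_nonneg_right habs hSt]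
  -- (3) 2 * d * D ≤ d^2 * A + 4 * s₀^2 * B
  have h3 : 2 * d * D ≤ d ^ 2 * A + 4 * s₀ ^ 2 * B := by
    rw [hDd, hA, hB, ← intervalIntegral.integral_const_mul,
      ← intervalIntegral.integral_const_mul, ← intervalIntegral.integral_const_mul,
      ← intervalIntegral.integral_add (hA_int.const_mul _) (hB_int.const_mul _)]
    apply intervalIntegral.integral_mono_on ha'b' (hD_int.const_mul _)
      ((hA_int.const_mul _).add (hB_int.const_mul _))
    intro t ht
    have htI := hIcc ht
    have hSt := (hS_pos t htI).le
    rcases abs_cases (u t * deriv u t) with ⟨he, _⟩ | ⟨he, _⟩ <;> rw [he] <;>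
      nlinarith [mul_nonneg hSt (sq_nonneg (d * u t - 2 * s₀ * deriv u t)),
        mul_nonneg hSt (sq_nonneg (d * u t + 2 * s₀ * deriv u t))]
  -- conclude d^2 * A ≤ 4 * s₀^2 * B
  have hmain : d ^ 2 * A ≤ 4 * s₀ ^ 2 * B := by nlinarith
  -- reduce the integrals over (0, r) to [a', b']
  have hredA : (∫ t in (0:ℝ)..r, u t ^ 2 * S t) = A := by
    rw [hA]
    apply bm_integral_trunc _ _ _ _ ha'0.le ha'b' hb'r.le
    · exact ((hu_cont.pow 2).continuousOn).mul hS_contI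
    · intro t ht
      rw [hu_zero t (Or.inl (lt_of_le_of_lt ht.2 ha'a))]
      ring
    · intro t ht
      rw [hu_zero t (Or.inr (lt_of_lt_of_le hbb' ht.1))]
      ring
  have hredB : (∫ t in (0:ℝ)..r, deriv u t ^ 2 * S t) = B := by
    rw [hB]
    apply bm_integral_trunc _ _ _ _ ha'0.le ha'b' hb'r.le
    · exact ((hdu_cont.pow 2).continuousOn).mul hS_contI
    · intro t ht
      rw [hdu_zero t (Or.inl (lt_of_le_of_lt ht.2 ha'a))]
      ring
    · intro t ht
      rw [hdu_zero t (Or.inr (lt_of_lt_of_le hbb' ht.1))]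
      ring
  rw [ge_iff_le, hredA, hredB, div_mul_eq_mul_div, div_le_iff₀ (by positivity)]
  nlinarith
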